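/- Let F be a 1 (mod 3)-regular forest on n vertices with 3 dividing e(F), and suppose F is not a perfect matching (i.e., not a disjoint union of single edges). Then R(F, Z_3) ≤ n + 2. -/
import Mathlib


open Finset

/-- A zero-sum (over `ZMod 3`) copy of the graph `F` in the edge-colored complete graph
on `Fin N`. -/
def HasZeroSumCopy {V : Type} [Fintype V] [DecidableEq V] {N : ℕ}
    (F : SimpleGraph V) [DecidableRel F.Adj] (χ : Sym2 (Fin N) → ZMod 3) : Prop :=
  ∃ f : V → Fin N, Function.Injective f ∧ ∑ e ∈ F.edgeFinset, χ (e.map f) = 0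

open SimpleGraph

set_option maxRecDepth 10000 in
lemma egz5 : ∀ v : Fin 5 → ZMod 3,
    (∀ a : ZMod 3, (univ.filter (fun i => v i = a)).card ≤ 3) →
    ∀ t : ZMod 3, ∃ i j k : Fin 5, i ≠ j ∧ i ≠ k ∧ j ≠ k ∧ v i + v j + v k = t := by
  decide


variable {V : Type} [Fintype V] [DecidableEq V]

set_option linter.unusedSectionVars false in
lemma core_leaf (F : SimpleGraph V) [DecidableRel F.Adj] (hF : F.IsAcyclic)
    (s : Finset V) (hs : s.Nonempty) :
    ∃ v ∈ s, (s.filter (F.Adj v)).card ≤ 1 := by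
  by_contra hcon
  push_neg at hcon
  -- build arbitrarily long paths with support in s
  have key : ∀ k : ℕ, ∃ (a b : V) (p : F.Walk a b), p.IsPath ∧
      (∀ x ∈ p.support, x ∈ s) ∧ p.length = k := by
    intro k
    induction k with
    | zero =>
      obtain ⟨v, hv⟩ := hs
      refine ⟨v, v, Walk.nil, by simp, ?_, rfl⟩
      intro x hx
      simp only [Walk.support_nil, List.mem_singleton] at hx
      simpa [hx] using hv
    | succ k ih =>
      obtain ⟨a, b, p, hp, hsupp, hlen⟩ := ih
      have ha : a ∈ s := hsupp a p.start_mem_support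
      -- any neighbor of a inside the support is the second vertex
      have huniq : ∀ c, F.Adj a c → c ∈ p.support → c = p.getVert 1 := by
        intro c hadj hc
        have hq : (p.takeUntil c hc).IsPath := hp.takeUntil hc
        have := hF.path_unique ⟨p.takeUntil c hc, hq⟩ (Path.singleton hadj)
        have heq : p.takeUntil c hc = Walk.cons hadj Walk.nil := by
          simpa [Path.singleton] using congrArg Subtype.val this
        have hspec := p.take_spec hc
        rw [heq] at hspec
        rw [← hspec]
        simp [Walk.getVert_cons_succ, Walk.getVert_zero]
      have h2 : 2 ≤ (s.filter (F.Adj a)).card := hcon a ha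
      have hex : ∃ c ∈ s, F.Adj a c ∧ c ∉ p.support := by
        by_contra hno
        push_neg at hno
        have hsub : s.filter (F.Adj a) ⊆ {p.getVert 1} := by
          intro c hcmem
          simp only [mem_filter] at hcmem
          simp [huniq c hcmem.2 (hno c hcmem.1 hcmem.2)]
        have := card_le_card hsub
        simp at this
        omega
      obtain ⟨c, hcs, hadj, hcsupp⟩ := hex
      refine ⟨c, b, Walk.cons hadj.symm p, ?_, ?_, ?_⟩
      · rw [Walk.cons_isPath_iff]; exact ⟨hp, hcsupp⟩
      · intro x hx
        rw [Walk.support_cons] at hx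
        rcases List.mem_cons.mp hx with h | h
        · simpa [h] using hcs
        · exact hsupp x h
      · simp [hlen]
  obtain ⟨a, b, p, hp, hsupp, hlen⟩ := key s.card
  have h1 : p.support.length = s.card + 1 := by simp [Walk.length_support, hlen]
  have h2 : p.support.toFinset ⊆ s := fun x hx => hsupp x (List.mem_toFinset.mp hx)
  have h3 := card_le_card h2
  rw [List.toFinset_card_of_nodup hp.support_nodup] at h3
  omega

lemma acyclic_edge_bound (F : SimpleGraph V) [DecidableRel F.Adj] (hF : F.IsAcyclic) :
    ∀ s : Finset V, s.Nonempty →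
      (F.edgeFinset.filter (fun e => ∀ x ∈ e, x ∈ s)).card + 1 ≤ s.card := by
  classical
  intro s
  induction s using Finset.strongInduction with
  | _ s ih =>
    intro hs
    obtain ⟨v, hv, hdeg⟩ := core_leaf F hF s hs
    have hsub : F.edgeFinset.filter (fun e => ∀ x ∈ e, x ∈ s) ⊆
        (F.edgeFinset.filter (fun e => ∀ x ∈ e, x ∈ s.erase v)) ∪
        (s.filter (F.Adj v)).image (fun w => s(v, w)) := by
      intro e he
      simp only [mem_filter] at he
      by_cases hve : v ∈ e
      · obtain ⟨w, rfl⟩ := Sym2.mem_iff_exists.mp hve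
        have hadj : F.Adj v w := by
          rw [← mem_edgeSet, ← mem_edgeFinset]; exact he.1
        refine mem_union_right _ (mem_image.mpr ⟨w, ?_, rfl⟩)
        exact mem_filter.mpr ⟨he.2 w (Sym2.mem_mk_right v w), hadj⟩
      · refine mem_union_left _ (mem_filter.mpr ⟨he.1, fun x hx => ?_⟩)
        exact mem_erase.mpr ⟨fun h => hve (h ▸ hx), he.2 x hx⟩
    have hcard := card_le_card hsub
    have h2 : ((s.filter (F.Adj v)).image (fun w => s(v, w))).card ≤ 1 :=
      le_trans (card_image_le) hdeg
    by_cases hne : (s.erase v).Nonempty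
    · have := ih (s.erase v) (erase_ssubset hv) hne
      have hcerase : (s.erase v).card = s.card - 1 := card_erase_of_mem hv
      have hvpos : 1 ≤ s.card := card_pos.mpr hs
      have := card_union_le (F.edgeFinset.filter (fun e => ∀ x ∈ e, x ∈ s.erase v))
        ((s.filter (F.Adj v)).image (fun w => s(v, w)))
      omega
    · have hsv : s = {v} := by
        rw [not_nonempty_iff_eq_empty] at hne
        have := (Finset.erase_eq_empty_iff s v).mp hne
        rcases this with h | h
        · exact absurd h (Finset.nonempty_iff_ne_empty.mp hs)
        · exact h
      have hempty : F.edgeFinset.filter (fun e => ∀ x ∈ e, x ∈ s) = ∅ := by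
        rw [Finset.eq_empty_iff_forall_notMem]
        intro e he
        simp only [mem_filter] at he
        induction e using Sym2.ind with | _ a b => ?_
        have hadj : F.Adj a b := by rw [← mem_edgeSet, ← mem_edgeFinset]; exact he.1
        have ha := he.2 a (Sym2.mem_mk_left a b)
        have hb := he.2 b (Sym2.mem_mk_right a b)
        rw [hsv, mem_singleton] at ha hb
        exact hadj.ne (ha.trans hb.symm)
      rw [hempty, hsv]
      simp

lemma edge_bound' (F : SimpleGraph V) [DecidableRel F.Adj] (hF : F.IsAcyclic)
    (hne : Nonempty V) : F.edgeFinset.card + 1 ≤ Fintype.card V := by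
  classical
  have := acyclic_edge_bound F hF univ univ_nonempty
  have heq : F.edgeFinset.filter (fun e => ∀ x ∈ e, x ∈ (univ : Finset V)) = F.edgeFinset := by
    apply filter_true_of_mem; intro e _; intro x _; exact mem_univ x
  rw [heq] at this
  simpa using this

lemma structural (F : SimpleGraph V) [DecidableRel F.Adj] (hF : F.IsAcyclic)
    (hreg : ∀ v, F.degree v % 3 = 1) (v0 : V) (hv0 : F.degree v0 ≠ 1) :
    ∃ w u1 u2 u3 : V, u1 ≠ u2 ∧ u1 ≠ u3 ∧ u2 ≠ u3 ∧ u1 ≠ w ∧ u2 ≠ w ∧ u3 ≠ w ∧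
      F.Adj w u1 ∧ F.Adj w u2 ∧ F.Adj w u3 ∧
      F.degree u1 = 1 ∧ F.degree u2 = 1 ∧ F.degree u3 = 1 := by
  classical
  set I : Finset V := univ.filter (fun v => 2 ≤ F.degree v) with hI
  have hv0I : v0 ∈ I := by
    simp only [hI, mem_filter, mem_univ, true_and]
    have := hreg v0; omega
  obtain ⟨w, hwI, hwdeg⟩ := core_leaf F hF I ⟨v0, hv0I⟩
  have hw4 : 4 ≤ F.degree w := by
    simp only [hI, mem_filter] at hwI
    have := hreg w; omega
  set L : Finset V := (F.neighborFinset w).filter (fun u => u ∉ I) with hL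
  have hLcard : 3 ≤ L.card := by
    have hsplit : (F.neighborFinset w).card =
        ((F.neighborFinset w).filter (fun u => u ∈ I)).card + L.card := by
      rw [hL]
      exact (card_filter_add_card_filter_not _).symm
    have hsub : (F.neighborFinset w).filter (fun u => u ∈ I) ⊆ I.filter (F.Adj w) := by
      intro u hu
      simp only [mem_filter, mem_neighborFinset] at hu ⊢
      exact ⟨hu.2, hu.1⟩
    have h1 := card_le_card hsub
    have h2 : (F.neighborFinset w).card = F.degree w := card_neighborFinset_eq_degree F w
    omega
  obtain ⟨L', hL'sub, hL'card⟩ := Finset.exists_subset_card_eq hLcard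
  obtain ⟨u1, u2, u3, h12, h13, h23, rfl⟩ := Finset.card_eq_three.mp hL'card
  have hmem : ∀ u ∈ L, F.Adj w u ∧ F.degree u = 1 := by
    intro u hu
    simp only [hL, mem_filter, mem_neighborFinset, hI, mem_univ, true_and, not_le] at hu
    refine ⟨hu.1, ?_⟩
    have hd1 : 1 ≤ F.degree u := by
      rw [← card_neighborFinset_eq_degree]
      exact card_pos.mpr ⟨w, (mem_neighborFinset F u w).mpr hu.1.symm⟩
    have := hreg u
    omega
  have h1 := hmem u1 (hL'sub (by simp))
  have h2 := hmem u2 (hL'sub (by simp))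
  have h3 := hmem u3 (hL'sub (by simp))
  exact ⟨w, u1, u2, u3, h12, h13, h23, h1.1.ne', h2.1.ne', h3.1.ne',
    h1.1, h2.1, h3.1, h1.2, h2.2, h3.2⟩

lemma D1 {n : ℕ} (hn : 7 ≤ n) (χ : Sym2 (Fin (n + 2)) → ZMod 3)
    (hbad : ∀ (p : Fin (n + 2)) (A : Finset (Fin (n + 2))), A ⊆ univ.erase p → A.card = 5 →
      ∃ a : ZMod 3, 4 ≤ (A.filter (fun q => χ s(p, q) = a)).card)
    (p : Fin (n + 2)) :
    ∃ c : ZMod 3, ((univ.erase p).filter (fun q => χ s(p, q) ≠ c)).card ≤ 1 := by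
  classical
  set M : Finset (Fin (n + 2)) := univ.erase p with hM
  have hMcard : M.card = n + 1 := by rw [hM, card_erase_of_mem (mem_univ p)]; simp
  have hfib : ∑ a ∈ (univ : Finset (ZMod 3)), (M.filter (fun q => χ s(p, q) = a)).card
      = M.card := by
    rw [← Finset.card_eq_sum_card_fiberwise (f := fun q => χ s(p, q))
      (t := (univ : Finset (ZMod 3)))]
    intro x _; exact mem_univ _
  have hmode : ∃ a0 : ZMod 3, 3 ≤ (M.filter (fun q => χ s(p, q) = a0)).card := by
    by_contra hno
    push_neg at hno
    have : ∑ a ∈ (univ : Finset (ZMod 3)), (M.filter (fun q => χ s(p, q) = a)).card ≤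
        ∑ _a ∈ (univ : Finset (ZMod 3)), 2 := by
      apply Finset.sum_le_sum
      intro a _
      have := hno a
      omega
    simp only [Finset.sum_const, smul_eq_mul] at this
    have hcard3 : (univ : Finset (ZMod 3)).card = 3 := by decide
    rw [hcard3, hfib, hMcard] at this
    omega
  obtain ⟨a0, ha0⟩ := hmode
  by_cases hE : (M.filter (fun q => χ s(p, q) ≠ a0)).card ≤ 1
  · exact ⟨a0, hE⟩
  exfalso
  push_neg at hE
  obtain ⟨q1, hq1, q2, hq2, hq12⟩ := Finset.one_lt_card.mp hE
  obtain ⟨T, hTsub, hTcard⟩ :=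
    Finset.exists_subset_card_eq (ha0 : 3 ≤ (M.filter (fun q => χ s(p, q) = a0)).card)
  have hq1T : q1 ∉ T := by
    intro h
    have := hTsub h
    simp only [mem_filter] at this hq1
    exact hq1.2 this.2
  have hq2T : q2 ∉ T := by
    intro h
    have := hTsub h
    simp only [mem_filter] at this hq2
    exact hq2.2 this.2
  set A : Finset (Fin (n + 2)) := insert q1 (insert q2 T) with hA
  have hAcard : A.card = 5 := by
    rw [hA, card_insert_of_notMem, card_insert_of_notMem hq2T, hTcard]
    simp only [mem_insert]
    rintro (rfl | h)
    · exact hq12 rfl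
    · exact hq1T h
  have hAsub : A ⊆ univ.erase p := by
    rw [hA]
    intro x hx
    simp only [mem_insert] at hx
    rcases hx with rfl | rfl | hx
    · exact mem_of_mem_filter _ hq1
    · exact mem_of_mem_filter _ hq2
    · exact mem_of_mem_filter _ (hTsub hx)
  obtain ⟨a, ha⟩ := hbad p A hAsub hAcard
  by_cases haa : a = a0
  · subst haa
    have hsub2 : A.filter (fun q => χ s(p, q) = a) ⊆ T := by
      intro x hx
      simp only [hA, mem_filter, mem_insert] at hx
      rcases hx.1 with rfl | rfl | h
      · exact absurd hx.2 (by simpa using (mem_filter.mp hq1).2)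
      · exact absurd hx.2 (by simpa using (mem_filter.mp hq2).2)
      · exact h
    have := card_le_card hsub2
    omega
  · have hsub2 : A.filter (fun q => χ s(p, q) = a) ⊆ {q1, q2} := by
      intro x hx
      simp only [hA, mem_filter, mem_insert] at hx
      rcases hx.1 with rfl | rfl | h
      · simp
      · simp
      · have := (mem_filter.mp (hTsub h)).2
        rw [hx.2] at this
        exact absurd this haa
    have h2 := card_le_card hsub2
    have : ({q1, q2} : Finset (Fin (n + 2))).card ≤ 2 := card_insert_le _ _ |>.trans (by simp)
    omega

lemma D2 {n : ℕ} (hn : 7 ≤ n) (χ : Sym2 (Fin (n + 2)) → ZMod 3)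
    (c : Fin (n + 2) → ZMod 3)
    (hexc : ∀ p, ((univ.erase p).filter (fun q => χ s(p, q) ≠ c p)).card ≤ 1) :
    ∃ c0 : ZMod 3, (univ.filter (fun p => c p ≠ c0)).card ≤ 1 := by
  classical
  set exc : Fin (n + 2) → Finset (Fin (n + 2)) :=
    fun p => (univ.erase p).filter (fun q => χ s(p, q) ≠ c p) with hexcdef
  have hexc' : ∀ p, (exc p).card ≤ 1 := hexc
  have hK : ∀ p q, p ≠ q → q ∉ exc p → χ s(p, q) = c p := by
    intro p q hpq hq
    by_contra hne
    exact hq (mem_filter.mpr ⟨mem_erase.mpr ⟨hpq.symm, mem_univ q⟩, hne⟩)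
  have hK2 : ∀ p q, p ≠ q → c p ≠ c q → q ∈ exc p ∨ p ∈ exc q := by
    intro p q hpq hcne
    by_contra hno
    push_neg at hno
    have h1 := hK p q hpq hno.1
    have h2 := hK q p hpq.symm hno.2
    rw [Sym2.eq_swap] at h2
    rw [h1] at h2
    exact hcne h2
  -- find a repeated color class
  have hrep : ∃ a : ZMod 3, 2 ≤ (univ.filter (fun p => c p = a)).card := by
    by_contra hno
    push_neg at hno
    have hfib : ∑ a ∈ (univ : Finset (ZMod 3)), (univ.filter (fun p => c p = a)).card
        = (univ : Finset (Fin (n + 2))).card := by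
      rw [← Finset.card_eq_sum_card_fiberwise (f := c) (t := (univ : Finset (ZMod 3)))]
      intro x _; exact mem_univ _
    have : ∑ a ∈ (univ : Finset (ZMod 3)), (univ.filter (fun p => c p = a)).card ≤
        ∑ _a ∈ (univ : Finset (ZMod 3)), 1 := by
      apply Finset.sum_le_sum
      intro a _
      have := hno a
      omega
    simp only [Finset.sum_const, smul_eq_mul, mul_one] at this
    have hcard3 : (univ : Finset (ZMod 3)).card = 3 := by decide
    rw [hcard3, hfib, Finset.card_univ, Fintype.card_fin] at this
    omega
  obtain ⟨a, ha⟩ := hrep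
  obtain ⟨p1, hp1, p2, hp2, hp12⟩ := Finset.one_lt_card.mp ha
  have hcp1 : c p1 = a := (mem_filter.mp hp1).2
  have hcp2 : c p2 = a := (mem_filter.mp hp2).2
  set W : Finset (Fin (n + 2)) := univ.filter (fun p => c p ≠ a) with hW
  have hWsub : W ⊆ exc p1 ∪ exc p2 := by
    intro q hq
    have hcq : c q ≠ a := (mem_filter.mp hq).2
    have hqp1 : p1 ≠ q := fun h => hcq (h ▸ hcp1)
    have hqp2 : p2 ≠ q := fun h => hcq (h ▸ hcp2)
    rcases hK2 p1 q hqp1 (by rw [hcp1]; exact fun h => hcq h.symm) with h | h1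
    · exact mem_union_left _ h
    rcases hK2 p2 q hqp2 (by rw [hcp2]; exact fun h => hcq h.symm) with h | h2
    · exact mem_union_right _ h
    -- both p1 p2 ∈ exc q, but |exc q| ≤ 1
    exfalso
    have hcard := hexc' q
    have : ({p1, p2} : Finset (Fin (n + 2))) ⊆ exc q := by
      intro x hx
      simp only [mem_insert, mem_singleton] at hx
      rcases hx with rfl | rfl
      · exact h1
      · exact h2
    have h2c : ({p1, p2} : Finset (Fin (n + 2))).card = 2 := card_pair hp12
    have := card_le_card this
    omega
  have hWcard : W.card ≤ 2 := by
    have := card_le_card hWsub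
    have h1 := hexc' p1
    have h2 := hexc' p2
    have := card_union_le (exc p1) (exc p2)
    omega
  by_cases hW1 : W.card ≤ 1
  · exact ⟨a, hW1⟩
  exfalso
  have hWeq : W.card = 2 := by omega
  obtain ⟨q1, q2, hq12, hWpair⟩ := Finset.card_eq_two.mp hWeq
  have hq1W : q1 ∈ W := by rw [hWpair]; simp
  have hq2W : q2 ∈ W := by rw [hWpair]; simp
  have hcq1 : c q1 ≠ a := (mem_filter.mp hq1W).2
  have hcq2 : c q2 ≠ a := (mem_filter.mp hq2W).2
  set Ca : Finset (Fin (n + 2)) := univ.filter (fun p => c p = a) with hCa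
  have hCacard : n ≤ Ca.card := by
    have : Ca = univ \ W := by
      rw [hCa, hW]
      ext x
      simp [not_not]
    rw [this, card_sdiff_of_subset (subset_univ W), hWeq]
    simp
  -- r ∈ Ca with q1 ∉ exc r: then r ∈ exc q1
  have haux : ∀ qq, qq ∈ W → Ca.filter (fun r => qq ∉ exc r) ⊆ exc qq := by
    intro qq hqq r hr
    simp only [mem_filter] at hr
    have hcr : c r = a := (mem_filter.mp hr.1).2
    have hcqq : c qq ≠ a := (mem_filter.mp hqq).2
    have hrq : r ≠ qq := fun h => hcqq (h ▸ hcr)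
    rcases hK2 r qq hrq (by rw [hcr]; exact fun h => hcqq h.symm) with h | h
    · exact absurd h hr.2
    · exact h
  have hS1 : 1 ≤ (Ca.filter (fun r => q1 ∈ exc r ∧ q2 ∈ exc r)).card := by
    have hcover : Ca ⊆ (Ca.filter (fun r => q1 ∈ exc r ∧ q2 ∈ exc r)) ∪
        (Ca.filter (fun r => q1 ∉ exc r)) ∪ (Ca.filter (fun r => q2 ∉ exc r)) := by
      intro r hr
      by_cases h1 : q1 ∈ exc r
      · by_cases h2 : q2 ∈ exc r
        · exact mem_union_left _ (mem_union_left _ (mem_filter.mpr ⟨hr, h1, h2⟩))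
        · exact mem_union_right _ (mem_filter.mpr ⟨hr, h2⟩)
      · exact mem_union_left _ (mem_union_right _ (mem_filter.mpr ⟨hr, h1⟩))
    have hc1 := card_le_card (haux q1 hq1W)
    have hc2 := card_le_card (haux q2 hq2W)
    have he1 := hexc' q1
    have he2 := hexc' q2
    have hu1 := card_union_le ((Ca.filter (fun r => q1 ∈ exc r ∧ q2 ∈ exc r)) ∪
        (Ca.filter (fun r => q1 ∉ exc r))) (Ca.filter (fun r => q2 ∉ exc r))
    have hu2 := card_union_le (Ca.filter (fun r => q1 ∈ exc r ∧ q2 ∈ exc r))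
        (Ca.filter (fun r => q1 ∉ exc r))
    have := card_le_card hcover
    omega
  have hne : (Ca.filter (fun r => q1 ∈ exc r ∧ q2 ∈ exc r)).Nonempty :=
    Finset.card_pos.mp (by omega)
  obtain ⟨r, hr⟩ := hne
  simp only [mem_filter] at hr
  have hcard := hexc' r
  have hsub : ({q1, q2} : Finset (Fin (n + 2))) ⊆ exc r := by
    intro x hx
    simp only [mem_insert, mem_singleton] at hx
    rcases hx with rfl | rfl
    · exact hr.2.1
    · exact hr.2.2
  have h2c : ({q1, q2} : Finset (Fin (n + 2))).card = 2 := card_pair hq12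
  have := card_le_card hsub
  omega

lemma greedy {n : ℕ} (F : SimpleGraph V) [DecidableRel F.Adj] (hF : F.IsAcyclic)
    (χ : Sym2 (Fin (n + 2)) → ZMod 3) (c0 : ZMod 3) (H : Finset (Fin (n + 2)))
    (hH : ∀ x ∈ H, ∃ ex, ∀ y ∈ H, y ≠ x → y ≠ ex → χ s(x, y) = c0) :
    ∀ s : Finset V, s.card + 1 ≤ H.card →
      ∃ f : V → Fin (n + 2), (∀ a ∈ s, ∀ b ∈ s, a ≠ b → f a ≠ f b) ∧
        (∀ v ∈ s, f v ∈ H) ∧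
        (∀ a ∈ s, ∀ b ∈ s, F.Adj a b → χ s(f a, f b) = c0) := by
  classical
  intro s
  induction s using Finset.strongInduction with
  | _ s ih =>
    intro hcard
    by_cases hs : s.Nonempty
    · obtain ⟨v, hv, hdeg⟩ := core_leaf F hF s hs
      set s' : Finset V := s.erase v with hs'
      have hlt : s' ⊂ s := erase_ssubset hv
      have hspos : 1 ≤ s.card := card_pos.mpr hs
      have hs'card : s'.card = s.card - 1 := card_erase_of_mem hv
      obtain ⟨f, hfinj, hfH, hfedge⟩ := ih s' hlt (by omega)
      have himgcard : (s'.image f).card ≤ s.card - 1 := le_trans card_image_le (by omega)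
      have htsub : s'.filter (F.Adj v) ⊆ s.filter (F.Adj v) := by
        intro x hx
        simp only [mem_filter, hs', mem_erase] at hx ⊢
        exact ⟨hx.1.2, hx.2⟩
      have htcard : (s'.filter (F.Adj v)).card ≤ 1 := le_trans (card_le_card htsub) hdeg
      by_cases ht : (s'.filter (F.Adj v)).Nonempty
      · -- v has exactly one neighbor w' in s'
        have hone : (s'.filter (F.Adj v)).card = 1 := le_antisymm htcard (card_pos.mpr ht)
        obtain ⟨w', hw'⟩ := card_eq_one.mp hone
        have hw'mem : w' ∈ s' ∧ F.Adj v w' := by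
          have : w' ∈ s'.filter (F.Adj v) := by rw [hw']; simp
          exact mem_filter.mp this
        have hxH : f w' ∈ H := hfH w' hw'mem.1
        obtain ⟨ex, hex⟩ := hH (f w') hxH
        have hychoice : ((H \ s'.image f).erase ex).Nonempty := by
          apply card_pos.mp
          have h3 := le_card_sdiff (s'.image f) H
          have h5 : (H \ s'.image f).card - 1 ≤ ((H \ s'.image f).erase ex).card :=
            pred_card_le_card_erase
          omega
        obtain ⟨y, hy⟩ := hychoice
        have hyH : y ∈ H := (mem_sdiff.mp (mem_of_mem_erase hy)).1
        have hyimg : y ∉ s'.image f := (mem_sdiff.mp (mem_of_mem_erase hy)).2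
        have hyex : y ≠ ex := ne_of_mem_erase hy
        refine ⟨Function.update f v y, ?_, ?_, ?_⟩
        · intro a ha b hb hab
          by_cases hav : a = v <;> by_cases hbv : b = v
          · subst hav; subst hbv; exact absurd rfl hab
          · subst hav
            have hbs' : b ∈ s' := mem_erase.mpr ⟨hbv, hb⟩
            rw [Function.update_self, Function.update_of_ne hbv]
            intro h
            exact hyimg (mem_image.mpr ⟨b, hbs', h.symm⟩)
          · subst hbv
            have has' : a ∈ s' := mem_erase.mpr ⟨hav, ha⟩
            rw [Function.update_self, Function.update_of_ne hav]
            intro h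
            exact hyimg (mem_image.mpr ⟨a, has', h⟩)
          · rw [Function.update_of_ne hav, Function.update_of_ne hbv]
            exact hfinj a (mem_erase.mpr ⟨hav, ha⟩) b (mem_erase.mpr ⟨hbv, hb⟩) hab
        · intro u hu
          by_cases huv : u = v
          · subst huv; rw [Function.update_self]; exact hyH
          · rw [Function.update_of_ne huv]; exact hfH u (mem_erase.mpr ⟨huv, hu⟩)
        · intro a ha b hb hadj
          by_cases hav : a = v <;> by_cases hbv : b = v
          · subst hav; subst hbv; exact absurd hadj (F.irrefl)
          · subst hav
            have hbs' : b ∈ s' := mem_erase.mpr ⟨hbv, hb⟩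
            have hbt : b ∈ s'.filter (F.Adj a) := mem_filter.mpr ⟨hbs', hadj⟩
            rw [hw', mem_singleton] at hbt
            subst hbt
            rw [Function.update_self, Function.update_of_ne hbv]
            have := hex y hyH ?_ hyex
            · rw [Sym2.eq_swap]; exact this
            · intro h
              exact hyimg (h ▸ mem_image.mpr ⟨b, hbs', rfl⟩)
          · subst hbv
            have has' : a ∈ s' := mem_erase.mpr ⟨hav, ha⟩
            have hat : a ∈ s'.filter (F.Adj b) := mem_filter.mpr ⟨has', hadj.symm⟩
            rw [hw', mem_singleton] at hat
            subst hat
            rw [Function.update_self, Function.update_of_ne hav]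
            exact hex y hyH (fun h => hyimg (h ▸ mem_image.mpr ⟨a, has', rfl⟩)) hyex
          · rw [Function.update_of_ne hav, Function.update_of_ne hbv]
            exact hfedge a (mem_erase.mpr ⟨hav, ha⟩) b (mem_erase.mpr ⟨hbv, hb⟩) hadj
      · -- v has no neighbor in s'
        rw [not_nonempty_iff_eq_empty] at ht
        have hychoice : (H \ s'.image f).Nonempty := by
          apply card_pos.mp
          have h3 := le_card_sdiff (s'.image f) H
          omega
        obtain ⟨y, hy⟩ := hychoice
        have hyH : y ∈ H := (mem_sdiff.mp hy).1
        have hyimg : y ∉ s'.image f := (mem_sdiff.mp hy).2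
        refine ⟨Function.update f v y, ?_, ?_, ?_⟩
        · intro a ha b hb hab
          by_cases hav : a = v <;> by_cases hbv : b = v
          · subst hav; subst hbv; exact absurd rfl hab
          · subst hav
            have hbs' : b ∈ s' := mem_erase.mpr ⟨hbv, hb⟩
            rw [Function.update_self, Function.update_of_ne hbv]
            intro h
            exact hyimg (mem_image.mpr ⟨b, hbs', h.symm⟩)
          · subst hbv
            have has' : a ∈ s' := mem_erase.mpr ⟨hav, ha⟩
            rw [Function.update_self, Function.update_of_ne hav]
            intro h
            exact hyimg (mem_image.mpr ⟨a, has', h⟩)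
          · rw [Function.update_of_ne hav, Function.update_of_ne hbv]
            exact hfinj a (mem_erase.mpr ⟨hav, ha⟩) b (mem_erase.mpr ⟨hbv, hb⟩) hab
        · intro u hu
          by_cases huv : u = v
          · subst huv; rw [Function.update_self]; exact hyH
          · rw [Function.update_of_ne huv]; exact hfH u (mem_erase.mpr ⟨huv, hu⟩)
        · intro a ha b hb hadj
          by_cases hav : a = v <;> by_cases hbv : b = v
          · subst hav; subst hbv; exact absurd hadj (F.irrefl)
          · subst hav
            have hbs' : b ∈ s' := mem_erase.mpr ⟨hbv, hb⟩
            have hbt : b ∈ s'.filter (F.Adj a) := mem_filter.mpr ⟨hbs', hadj⟩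
            rw [ht] at hbt
            exact absurd hbt (notMem_empty b)
          · subst hbv
            have has' : a ∈ s' := mem_erase.mpr ⟨hav, ha⟩
            have hat : a ∈ s'.filter (F.Adj b) := mem_filter.mpr ⟨has', hadj.symm⟩
            rw [ht] at hat
            exact absurd hat (notMem_empty a)
          · rw [Function.update_of_ne hav, Function.update_of_ne hbv]
            exact hfedge a (mem_erase.mpr ⟨hav, ha⟩) b (mem_erase.mpr ⟨hbv, hb⟩) hadj
    · rw [not_nonempty_iff_eq_empty] at hs
      subst hs
      exact ⟨fun _ => ⟨0, by omega⟩, by simp, by simp, by simp⟩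

lemma good_case {n : ℕ} (F : SimpleGraph V) [DecidableRel F.Adj]
    (hcard : Fintype.card V = n) (hn : 4 ≤ n)
    (χ : Sym2 (Fin (n + 2)) → ZMod 3)
    {w u1 u2 u3 : V} (h12 : u1 ≠ u2) (h13 : u1 ≠ u3) (h23 : u2 ≠ u3)
    (h1w : u1 ≠ w) (h2w : u2 ≠ w) (h3w : u3 ≠ w)
    (hadj1 : F.Adj w u1) (hadj2 : F.Adj w u2) (hadj3 : F.Adj w u3)
    (hnb1 : F.neighborFinset u1 = {w}) (hnb2 : F.neighborFinset u2 = {w})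
    (hnb3 : F.neighborFinset u3 = {w})
    {p : Fin (n + 2)} {A : Finset (Fin (n + 2))} (hpA : p ∉ A) (hA5 : A.card = 5)
    (hAmult : ∀ a : ZMod 3, (A.filter (fun q => χ s(p, q) = a)).card ≤ 3) :
    HasZeroSumCopy F χ := by
  classical
  set s₁ : Finset V := (((univ.erase w).erase u1).erase u2).erase u3 with hs₁
  set B : Finset (Fin (n + 2)) := (univ \ A).erase p with hB
  have hs₁card : s₁.card = n - 4 := by
    rw [hs₁]
    rw [card_erase_of_mem, card_erase_of_mem, card_erase_of_mem, card_erase_of_mem]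
    · simp [hcard]; omega
    · exact mem_univ w
    · exact mem_erase.mpr ⟨h1w, mem_univ u1⟩
    · exact mem_erase.mpr ⟨h12.symm, mem_erase.mpr ⟨h2w, mem_univ u2⟩⟩
    · exact mem_erase.mpr ⟨h23.symm, mem_erase.mpr ⟨h13.symm,
        mem_erase.mpr ⟨h3w, mem_univ u3⟩⟩⟩
  have hBcard : B.card = n - 4 := by
    rw [hB, card_erase_of_mem, card_sdiff_of_subset (subset_univ A)]
    · simp [hA5]; omega
    · exact mem_sdiff.mpr ⟨mem_univ p, hpA⟩
  have hcardeq : s₁.card = B.card := by rw [hs₁card, hBcard]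
  set e0 : {x // x ∈ s₁} ≃ {x // x ∈ B} := Finset.equivOfCardEq hcardeq with he0
  set g : V → Fin (n + 2) := fun v => if h : v ∈ s₁ then (e0 ⟨v, h⟩ : Fin (n + 2)) else p
    with hg
  -- facts about membership in s₁
  have hmem_s₁ : ∀ v : V, v ∈ s₁ ↔ (v ≠ u3 ∧ v ≠ u2 ∧ v ≠ u1 ∧ v ≠ w) := by
    intro v; rw [hs₁]; simp only [mem_erase, mem_univ, and_true]
    try tauto
  have hws₁ : w ∉ s₁ := by rw [hmem_s₁]; tauto
  have hu1s₁ : u1 ∉ s₁ := by rw [hmem_s₁]; tauto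
  have hu2s₁ : u2 ∉ s₁ := by rw [hmem_s₁]; tauto
  have hu3s₁ : u3 ∉ s₁ := by rw [hmem_s₁]; tauto
  have hgw : g w = p := by rw [hg]; simp [hws₁]
  have hgB : ∀ v (h : v ∈ s₁), g v ∈ B := by
    intro v h; rw [hg]; simp only [h, dif_pos]; exact (e0 ⟨v, h⟩).2
  have hginj : ∀ v v' (hv : v ∈ s₁) (hv' : v' ∈ s₁), g v = g v' → v = v' := by
    intro v v' hv hv' heq
    rw [hg] at heq; simp only [hv, hv', dif_pos] at heq
    have := e0.injective (Subtype.ext heq)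
    exact congrArg Subtype.val this
  -- the three leaf edges
  set Tedges : Finset (Sym2 V) := {s(w, u1), s(w, u2), s(w, u3)} with hT
  have hTsub : Tedges ⊆ F.edgeFinset := by
    intro e he
    rw [hT] at he
    simp only [mem_insert, mem_singleton] at he
    rcases he with rfl | rfl | rfl <;> rw [mem_edgeFinset] <;> assumption
  -- each edge not in Tedges avoids u1 u2 u3
  have havoid : ∀ e ∈ F.edgeFinset \ Tedges, ∀ x ∈ e, x ≠ u1 ∧ x ≠ u2 ∧ x ≠ u3 := by
    intro e he x hx
    rw [mem_sdiff] at he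
    refine ⟨?_, ?_, ?_⟩ <;> rintro rfl
    · obtain ⟨c, rfl⟩ := Sym2.mem_iff_exists.mp hx
      have hadj : F.Adj x c := by rw [← mem_edgeSet, ← mem_edgeFinset]; exact he.1
      have : c ∈ F.neighborFinset x := (mem_neighborFinset F x c).mpr hadj
      rw [hnb1, mem_singleton] at this
      subst this
      exact he.2 (by rw [hT]; simp [Sym2.eq_swap])
    · obtain ⟨c, rfl⟩ := Sym2.mem_iff_exists.mp hx
      have hadj : F.Adj x c := by rw [← mem_edgeSet, ← mem_edgeFinset]; exact he.1
      have : c ∈ F.neighborFinset x := (mem_neighborFinset F x c).mpr hadj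
      rw [hnb2, mem_singleton] at this
      subst this
      exact he.2 (by rw [hT]; simp [Sym2.eq_swap])
    · obtain ⟨c, rfl⟩ := Sym2.mem_iff_exists.mp hx
      have hadj : F.Adj x c := by rw [← mem_edgeSet, ← mem_edgeFinset]; exact he.1
      have : c ∈ F.neighborFinset x := (mem_neighborFinset F x c).mpr hadj
      rw [hnb3, mem_singleton] at this
      subst this
      exact he.2 (by rw [hT]; simp [Sym2.eq_swap])
  set S : ZMod 3 := ∑ e ∈ F.edgeFinset \ Tedges, χ (e.map g) with hS
  -- enumerate A
  have hA5' : A.card = 5 := hA5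
  set e5 : {q // q ∈ A} ≃ Fin 5 := (A.equivFin).trans (finCongr hA5') with he5
  set vfun : Fin 5 → ZMod 3 := fun i => χ s(p, (e5.symm i : Fin (n + 2))) with hvfun
  have hmult : ∀ a : ZMod 3, (univ.filter (fun i => vfun i = a)).card ≤ 3 := by
    intro a
    refine le_trans (le_of_eq ?_) (hAmult a)
    apply Finset.card_bij (fun i _ => (e5.symm i : Fin (n + 2)))
    · intro i hi
      simp only [mem_filter, mem_univ, true_and] at hi ⊢
      exact ⟨(e5.symm i).2, hi⟩
    · intro i _ j _ hij
      exact e5.symm.injective (Subtype.ext hij)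
    · intro q hq
      simp only [mem_filter] at hq
      refine ⟨e5 ⟨q, hq.1⟩, ?_, by simp⟩
      simp only [mem_filter, mem_univ, true_and, hvfun, Equiv.symm_apply_apply]
      exact hq.2
  obtain ⟨i, j, k, hij, hik, hjk, hsum⟩ := egz5 vfun hmult (-S)
  set x : Fin (n + 2) := (e5.symm i : Fin (n + 2)) with hx
  set y : Fin (n + 2) := (e5.symm j : Fin (n + 2)) with hy
  set z : Fin (n + 2) := (e5.symm k : Fin (n + 2)) with hz
  have hxA : x ∈ A := (e5.symm i).2
  have hyA : y ∈ A := (e5.symm j).2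
  have hzA : z ∈ A := (e5.symm k).2
  have hxy : x ≠ y := fun h => hij (e5.symm.injective (Subtype.ext h))
  have hxz : x ≠ z := fun h => hik (e5.symm.injective (Subtype.ext h))
  have hyz : y ≠ z := fun h => hjk (e5.symm.injective (Subtype.ext h))
  set f : V → Fin (n + 2) := fun v =>
    if v = u1 then x else if v = u2 then y else if v = u3 then z else g v with hf
  have hfu1 : f u1 = x := by rw [hf]; simp
  have hfu2 : f u2 = y := by rw [hf]; simp [h12.symm]
  have hfu3 : f u3 = z := by rw [hf]; simp [h13.symm, h23.symm]
  have hfw : f w = p := by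
    rw [hf]; simp only [if_neg (Ne.symm h1w), if_neg (Ne.symm h2w), if_neg (Ne.symm h3w)]
    exact hgw
  have hfgen : ∀ v, v ≠ u1 → v ≠ u2 → v ≠ u3 → f v = g v := by
    intro v hv1 hv2 hv3; rw [hf]; simp [hv1, hv2, hv3]
  have hclass : ∀ v, v = u1 ∨ v = u2 ∨ v = u3 ∨ v = w ∨ v ∈ s₁ := by
    intro v; rw [hmem_s₁]; tauto
  have hBnotA : ∀ t, t ∈ B → t ∉ A ∧ t ≠ p := by
    intro t ht; rw [hB] at ht
    simp only [mem_erase, mem_sdiff, mem_univ, true_and] at ht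
    exact ⟨ht.2, ht.1⟩
  have hfs₁ : ∀ v, v ∈ s₁ → f v = g v := by
    intro v hv
    rw [hmem_s₁] at hv
    exact hfgen v hv.2.2.1 hv.2.1 hv.1
  have hfs₁B : ∀ v, v ∈ s₁ → f v ∈ B := by
    intro v hv; rw [hfs₁ v hv]; exact hgB v hv
  have hinj : Function.Injective f := by
    intro a b hab
    rcases hclass a with rfl | rfl | rfl | rfl | ha <;>
      rcases hclass b with rfl | rfl | rfl | rfl | hb
    · rfl
    · rw [hfu1, hfu2] at hab; exact absurd hab hxy
    · rw [hfu1, hfu3] at hab; exact absurd hab hxz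
    · rw [hfu1, hfw] at hab; exact absurd (hab ▸ hxA) hpA
    · rw [hfu1] at hab; exact absurd (hab ▸ hxA) (hBnotA _ (hfs₁B b hb)).1
    · rw [hfu2, hfu1] at hab; exact absurd hab.symm hxy
    · rfl
    · rw [hfu2, hfu3] at hab; exact absurd hab hyz
    · rw [hfu2, hfw] at hab; exact absurd (hab ▸ hyA) hpA
    · rw [hfu2] at hab; exact absurd (hab ▸ hyA) (hBnotA _ (hfs₁B b hb)).1
    · rw [hfu3, hfu1] at hab; exact absurd hab.symm hxz
    · rw [hfu3, hfu2] at hab; exact absurd hab.symm hyz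
    · rfl
    · rw [hfu3, hfw] at hab; exact absurd (hab ▸ hzA) hpA
    · rw [hfu3] at hab; exact absurd (hab ▸ hzA) (hBnotA _ (hfs₁B b hb)).1
    · rw [hfw, hfu1] at hab; exact absurd (hab.symm ▸ hxA) hpA
    · rw [hfw, hfu2] at hab; exact absurd (hab.symm ▸ hyA) hpA
    · rw [hfw, hfu3] at hab; exact absurd (hab.symm ▸ hzA) hpA
    · rfl
    · rw [hfw] at hab; exact absurd hab.symm (hBnotA _ (hfs₁B b hb)).2
    · rw [hfu1] at hab; exact absurd (hab.symm ▸ hxA) (hBnotA _ (hfs₁B a ha)).1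
    · rw [hfu2] at hab; exact absurd (hab.symm ▸ hyA) (hBnotA _ (hfs₁B a ha)).1
    · rw [hfu3] at hab; exact absurd (hab.symm ▸ hzA) (hBnotA _ (hfs₁B a ha)).1
    · rw [hfw] at hab; exact absurd hab (hBnotA _ (hfs₁B a ha)).2
    · exact hginj a b ha hb (by rw [← hfs₁ a ha, ← hfs₁ b hb]; exact hab)
  refine ⟨f, hinj, ?_⟩
  have hsplit := Finset.sum_sdiff (f := fun e => χ (e.map f)) hTsub
  rw [← hsplit]
  have hrest : ∑ e ∈ F.edgeFinset \ Tedges, χ (e.map f) = S := by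
    rw [hS]
    apply Finset.sum_congr rfl
    intro e he
    congr 1
    induction e using Sym2.ind with
    | _ a b =>
      have hav1 := havoid _ he a (Sym2.mem_mk_left a b)
      have hav2 := havoid _ he b (Sym2.mem_mk_right a b)
      rw [Sym2.map_pair_eq, Sym2.map_pair_eq,
        hfgen a hav1.1 hav1.2.1 hav1.2.2, hfgen b hav2.1 hav2.2.1 hav2.2.2]
  have hne1 : s(w, u1) ∉ ({s(w, u2), s(w, u3)} : Finset (Sym2 V)) := by
    simp only [mem_insert, mem_singleton, Sym2.eq_iff]
    rintro (h | h)
    · rcases h with ⟨-, h⟩ | ⟨h, -⟩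
      · exact h12 h
      · exact h2w h.symm
    · rcases h with ⟨-, h⟩ | ⟨h, -⟩
      · exact h13 h
      · exact h3w h.symm
  have hne2 : s(w, u2) ∉ ({s(w, u3)} : Finset (Sym2 V)) := by
    simp only [mem_singleton, Sym2.eq_iff]
    rintro (⟨-, h⟩ | ⟨h, -⟩)
    · exact h23 h
    · exact h3w h.symm
  have hTsum : ∑ e ∈ Tedges, χ (e.map f) = vfun i + vfun j + vfun k := by
    rw [hT, Finset.sum_insert hne1, Finset.sum_insert hne2, Finset.sum_singleton,
      Sym2.map_pair_eq, Sym2.map_pair_eq, Sym2.map_pair_eq, hfw, hfu1, hfu2, hfu3]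
    simp only [hvfun]
    rw [← hx, ← hy, ← hz]
    ring
  rw [hrest, hTsum, hsum]
  ring


lemma bad_case {n : ℕ} (F : SimpleGraph V) [DecidableRel F.Adj]
    (hcard : Fintype.card V = n) (hforest : F.IsAcyclic)
    (hdiv : 3 ∣ F.edgeFinset.card) (hn : 7 ≤ n)
    (χ : Sym2 (Fin (n + 2)) → ZMod 3)
    (hbad : ∀ (p : Fin (n + 2)) (A : Finset (Fin (n + 2))), A ⊆ univ.erase p → A.card = 5 →
      ∃ a : ZMod 3, 4 ≤ (A.filter (fun q => χ s(p, q) = a)).card) :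
    HasZeroSumCopy F χ := by
  classical
  choose c hc using D1 hn χ hbad
  obtain ⟨c0, hc0⟩ := D2 hn χ c hc
  set W : Finset (Fin (n + 2)) := univ.filter (fun p => c p ≠ c0) with hW
  set H : Finset (Fin (n + 2)) := univ \ W with hH
  have hHcard : n + 1 ≤ H.card := by
    rw [hH, card_sdiff_of_subset (subset_univ W), Finset.card_univ, Fintype.card_fin]
    omega
  have hHprop : ∀ x ∈ H, ∃ ex, ∀ y ∈ H, y ≠ x → y ≠ ex → χ s(x, y) = c0 := by
    intro x hx
    have hcx : c x = c0 := by
      have hxW := (mem_sdiff.mp hx).2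
      by_contra hne
      exact hxW (mem_filter.mpr ⟨mem_univ x, hne⟩)
    have h1 := hc x
    obtain ⟨ex, hex⟩ := Finset.card_le_one_iff_subset_singleton.mp h1
    refine ⟨ex, fun y hyH hyx hyex => ?_⟩
    by_contra hne
    have hymem : y ∈ (univ.erase x).filter (fun q => χ s(x, q) ≠ c x) :=
      mem_filter.mpr ⟨mem_erase.mpr ⟨hyx, mem_univ y⟩, by rw [hcx]; exact hne⟩
    exact hyex (mem_singleton.mp (hex hymem))
  obtain ⟨f, hfinj, _, hfedge⟩ := greedy F hforest χ c0 H hHprop univ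
    (by rw [Finset.card_univ, hcard]; omega)
  refine ⟨f, ?_, ?_⟩
  · intro a b hab
    by_contra hne
    exact hfinj a (mem_univ a) b (mem_univ b) hne hab
  · have hall : ∀ e ∈ F.edgeFinset, χ (e.map f) = c0 := by
      intro e he
      induction e using Sym2.ind with
      | _ a b =>
        have hadj : F.Adj a b := by rw [← mem_edgeSet, ← mem_edgeFinset]; exact he
        rw [Sym2.map_pair_eq]
        exact hfedge a (mem_univ a) b (mem_univ b) hadj
    rw [Finset.sum_congr rfl hall, Finset.sum_const, nsmul_eq_mul,
      show ((F.edgeFinset.card : ZMod 3)) = 0 from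
        (ZMod.natCast_eq_zero_iff _ 3).mpr hdiv, zero_mul]

theorem stmt3 {V : Type} [Fintype V] [DecidableEq V]
    (F : SimpleGraph V) [DecidableRel F.Adj] (n : ℕ)
    (hcard : Fintype.card V = n)
    (hforest : F.IsAcyclic)
    (hdiv : 3 ∣ F.edgeFinset.card)
    (hreg : ∀ v, F.degree v % 3 = 1)
    (hnotmatching : ¬ ∀ v, F.degree v = 1)
    (χ : Sym2 (Fin (n + 2)) → ZMod 3) :
    HasZeroSumCopy F χ := by
  classical
  push_neg at hnotmatching
  obtain ⟨v0, hv0⟩ := hnotmatching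
  have hVne : Nonempty V := ⟨v0⟩
  have hebound := edge_bound' F hforest hVne
  have hsum := F.sum_degrees_eq_twice_card_edges
  have hd1 : ∀ v, 1 ≤ F.degree v := by intro v; have := hreg v; omega
  have hd4 : 4 ≤ F.degree v0 := by have := hreg v0; omega
  have hsplit : ∑ v ∈ univ.erase v0, F.degree v + F.degree v0 = ∑ v, F.degree v :=
    Finset.sum_erase_add _ _ (mem_univ v0)
  rw [hsum] at hsplit
  have hlow : (univ.erase v0).card ≤ ∑ v ∈ univ.erase v0, F.degree v := by
    calc (univ.erase v0).card = (univ.erase v0).card • 1 := by simp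
    _ ≤ _ := Finset.card_nsmul_le_sum _ _ _ (fun v _ => hd1 v)
  have hucard : (univ.erase v0).card = n - 1 := by
    rw [card_erase_of_mem (mem_univ v0), Finset.card_univ, hcard]
  rw [hcard] at hebound
  have hn : 7 ≤ n := by omega
  obtain ⟨w, u1, u2, u3, h12, h13, h23, h1w, h2w, h3w, hadj1, hadj2, hadj3,
    hdeg1, hdeg2, hdeg3⟩ := structural F hforest hreg v0 hv0
  have hnb : ∀ u, F.degree u = 1 → F.Adj w u → F.neighborFinset u = {w} := by
    intro u hdu hadj
    have hcard1 : (F.neighborFinset u).card = 1 := by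
      rw [card_neighborFinset_eq_degree]; exact hdu
    obtain ⟨b, hb⟩ := card_eq_one.mp hcard1
    have hwmem : w ∈ F.neighborFinset u := (mem_neighborFinset F u w).mpr hadj.symm
    rw [hb, mem_singleton] at hwmem
    rw [hb, hwmem]
  by_cases hP : ∃ (p : Fin (n + 2)) (A : Finset (Fin (n + 2))), A ⊆ univ.erase p ∧
      A.card = 5 ∧ ∀ a : ZMod 3, (A.filter (fun q => χ s(p, q) = a)).card ≤ 3
  · obtain ⟨p, A, hA1, hA2, hA3⟩ := hP
    have hpA : p ∉ A := fun h => (mem_erase.mp (hA1 h)).1 rfl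
    exact good_case F hcard (by omega) χ h12 h13 h23 h1w h2w h3w hadj1 hadj2 hadj3
      (hnb u1 hdeg1 hadj1) (hnb u2 hdeg2 hadj2) (hnb u3 hdeg3 hadj3) hpA hA2 hA3
  · push_neg at hP
    apply bad_case F hcard hforest hdiv hn χ
    intro p A hsub hc5
    obtain ⟨a, ha⟩ := hP p A hsub hc5
    exact ⟨a, by omega⟩
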